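/- Let d_1,...,d_r be positive integers with N = ∏ d_i, and let (m_1,...,m_r) ∈ ℤ_{≥0}^r satisfy Σ m_i d_i = qN for some integer q ≥ 1. Then there exist m'_i with 0 ≤ m'_i ≤ m_i for all i and Σ m'_i d_i = N. -/

import Mathlib

namespace STP

inductive Reach : List (ℕ × ℕ) → ℕ → Prop
  | nil : Reach [] 0
  | cons (p : ℕ × ℕ) (x s : ℕ) (l : List (ℕ × ℕ)) (hx : x ≤ p.2) (h : Reach l s) :
      Reach (p :: l) (x * p.1 + s)
def Pr (l : List (ℕ × ℕ)) : ℕ := (l.map Prod.fst).prod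
def Ms (l : List (ℕ × ℕ)) : ℕ := (l.map (fun p => p.2 * p.1)).sum
@[simp] lemma Pr_nil : Pr [] = 1 := rfl
@[simp] lemma Pr_cons (p l) : Pr (p :: l) = p.1 * Pr l := by simp [Pr]
@[simp] lemma Pr_append (l₁ l₂) : Pr (l₁ ++ l₂) = Pr l₁ * Pr l₂ := by simp [Pr]
@[simp] lemma Ms_nil : Ms [] = 0 := rfl
@[simp] lemma Ms_cons (p l) : Ms (p :: l) = p.2 * p.1 + Ms l := by simp [Ms]
@[simp] lemma Ms_append (l₁ l₂) : Ms (l₁ ++ l₂) = Ms l₁ + Ms l₂ := by simp [Ms]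
lemma Pr_perm {l l' : List (ℕ × ℕ)} (h : l.Perm l') : Pr l = Pr l' := (h.map Prod.fst).prod_eq
lemma Ms_perm {l l' : List (ℕ × ℕ)} (h : l.Perm l') : Ms l = Ms l' := by
  unfold Ms; exact (h.map (fun p => p.2 * p.1)).sum_eq

lemma Pr_pos {l : List (ℕ × ℕ)} (h : ∀ p ∈ l, 1 ≤ p.1) : 1 ≤ Pr l := by
  induction l with
  | nil => simp
  | cons p l ih =>
      have h1 : 1 ≤ p.1 := h p (by simp)
      have h2 : 1 ≤ Pr l := ih (fun q hq => h q (by simp [hq]))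
      calc 1 = 1 * 1 := rfl
      _ ≤ p.1 * Pr l := Nat.mul_le_mul h1 h2
      _ = Pr (p :: l) := (Pr_cons p l).symm

lemma reach_cons_iff {p : ℕ × ℕ} {l : List (ℕ × ℕ)} {t : ℕ} :
    Reach (p :: l) t ↔ ∃ x s, x ≤ p.2 ∧ Reach l s ∧ t = x * p.1 + s := by
  constructor
  · intro h; cases h with
    | cons _ x s _ hx h => exact ⟨x, s, hx, h, rfl⟩
  · rintro ⟨x, s, hx, h, rfl⟩; exact .cons p x s l hx h

lemma Reach.perm {l l' : List (ℕ × ℕ)} (hp : l.Perm l') :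
    ∀ {s : ℕ}, Reach l s → Reach l' s := by
  induction hp with
  | nil => intro s h; exact h
  | cons p hp ih =>
      intro s h
      rcases reach_cons_iff.1 h with ⟨x, s', hx, h', rfl⟩
      exact .cons p x s' _ hx (ih h')
  | swap p q l =>
      intro s h
      rcases reach_cons_iff.1 h with ⟨x, s', hx, h', rfl⟩
      rcases reach_cons_iff.1 h' with ⟨y, s'', hy, h'', rfl⟩
      have he : x * q.1 + (y * p.1 + s'') = y * p.1 + (x * q.1 + s'') := by ring
      rw [he]
      exact .cons p y _ _ hy (.cons q x _ _ hx h'')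
  | trans h1 h2 ih1 ih2 => intro s h; exact ih2 (ih1 h)

lemma reach_zero (l : List (ℕ × ℕ)) : Reach l 0 := by
  induction l with
  | nil => exact .nil
  | cons p l ih => have := Reach.cons p 0 0 l (Nat.zero_le _) ih; simpa using this

lemma reach_single (c : ℕ × ℕ) (x : ℕ) (hx : x ≤ c.2) : Reach [c] (x * c.1) := by
  have := Reach.cons c x 0 [] hx .nil
  simpa using this

lemma reach_append {l₁ l₂ : List (ℕ × ℕ)} {s₁ s₂ : ℕ}
    (h₁ : Reach l₁ s₁) (h₂ : Reach l₂ s₂) : Reach (l₁ ++ l₂) (s₁ + s₂) := by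
  induction h₁ with
  | nil => simpa using h₂
  | cons p x s l hx h ih =>
      have := Reach.cons p x (s + s₂) (l ++ l₂) hx ih
      simpa [Nat.add_assoc] using this

lemma reach_ones {l : List (ℕ × ℕ)} (h1 : ∀ p ∈ l, p.1 = 1) {f : ℕ} (hf : f ≤ Ms l) :
    Reach l f := by
  induction l generalizing f with
  | nil => simp [Ms] at hf; simpa [hf] using Reach.nil
  | cons p l ih =>
      have hp1 : p.1 = 1 := h1 p (by simp)
      have hrest : ∀ q ∈ l, q.1 = 1 := fun q hq => h1 q (by simp [hq])
      by_cases hc : f ≤ p.2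
      · have := Reach.cons p f 0 l hc (reach_zero l)
        simpa [hp1] using this
      · push_neg at hc
        have hf' : f - p.2 ≤ Ms l := by
          simp [Ms, hp1] at hf ⊢; omega
        have := Reach.cons p p.2 (f - p.2) l le_rfl (ih hrest hf')
        have he : p.2 * p.1 + (f - p.2) = f := by
          simp [hp1]; omega
        rwa [he] at this

lemma exists_residue {a b s : ℕ} (ha : 1 ≤ a) (hco : Nat.Coprime a b) :
    ∃ β, β < a ∧ b * β ≡ s [MOD a] := by
  haveI : NeZero a := ⟨by omega⟩
  set u : (ZMod a)ˣ := ZMod.unitOfCoprime b hco.symm with hu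
  set z : ZMod a := ((u⁻¹ : (ZMod a)ˣ) : ZMod a) * (s : ZMod a) with hz
  refine ⟨z.val, ZMod.val_lt z, ?_⟩
  have hv : ((z.val : ℕ) : ZMod a) = z := ZMod.natCast_rightInverse z
  have hbu : ((b : ℕ) : ZMod a) = (u : ZMod a) := (ZMod.coe_unitOfCoprime b hco.symm).symm
  have h1 : ((b * z.val : ℕ) : ZMod a) = ((s : ℕ) : ZMod a) := by
    push_cast
    rw [hv, hbu, hz, ← mul_assoc]
    norm_cast
    rw [mul_inv_cancel]
    simp
  exact (ZMod.natCast_eq_natCast_iff _ _ _).1 h1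

lemma twofull {a b m₁ m₂ s : ℕ} (ha : 1 ≤ a) (hb : 1 ≤ b) (hco : Nat.Coprime a b)
    (hm₁ : b ≤ m₁) (hm₂ : a ≤ m₂) (hs₁ : a * b ≤ s) (hs₂ : s + a * b ≤ m₁ * a + m₂ * b) :
    ∃ x₁ x₂, x₁ ≤ m₁ ∧ x₂ ≤ m₂ ∧ x₁ * a + x₂ * b = s := by
  obtain ⟨β, hβa, hβ⟩ := exists_residue (s := s) ha hco
  have hb1 : β * b + b ≤ a * b := by
    have h : (β + 1) * b ≤ a * b := Nat.mul_le_mul_right b (by omega)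
    calc β * b + b = (β + 1) * b := by ring
    _ ≤ a * b := h
  have hβs : β * b ≤ s := by omega
  have hdvd : a ∣ s - β * b := by
    have h := (Nat.modEq_iff_dvd' (show b * β ≤ s by rw [Nat.mul_comm]; omega)).1 hβ
    rwa [Nat.mul_comm] at h
  set D := m₂ - β with hD
  set E := s - β * b with hE
  have hsE : s = β * b + E := by omega
  obtain ⟨q₁, r₁, hr₁, hq₁⟩ : ∃ q r, r < a ∧ D = a * q + r :=
    ⟨D / a, D % a, Nat.mod_lt _ (by omega), (Nat.div_add_mod D a).symm⟩
  obtain ⟨q₂, r₂, hr₂, hq₂⟩ : ∃ q r, r < a * b ∧ E = (a * b) * q + r :=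
    ⟨E / (a*b), E % (a*b), Nat.mod_lt _ (by positivity), (Nat.div_add_mod E (a*b)).symm⟩
  obtain ⟨t, hta, htb, hcase⟩ :
      ∃ t, a * t ≤ D ∧ (a * b) * t ≤ E ∧
        (E - (a * b) * t < a * b ∨ (β + a * t) + r₁ = m₂) := by
    rcases le_total q₂ q₁ with hc | hc
    · refine ⟨q₂, ?_, by omega, Or.inl (by omega)⟩
      have h1 : a * q₂ ≤ a * q₁ := Nat.mul_le_mul_left a hc
      omega
    · refine ⟨q₁, by omega, ?_, Or.inr (by omega)⟩
      have h1 : (a*b) * q₁ ≤ (a*b) * q₂ := Nat.mul_le_mul_left _ hc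
      omega
  set x₂ := β + a * t with hx₂
  have hx₂m : x₂ ≤ m₂ := by omega
  have hx₂b : x₂ * b = β * b + (a * b) * t := by rw [hx₂]; ring
  have hx₂s : x₂ * b ≤ s := by omega
  have hsub : s - x₂ * b = E - (a * b) * t := by omega
  have hdvd2 : a ∣ s - x₂ * b := by
    rw [hsub]
    exact Nat.dvd_sub hdvd ⟨b * t, by ring⟩
  set x₁ := (s - x₂ * b) / a with hx₁
  have heq : x₁ * a = s - x₂ * b := Nat.div_mul_cancel hdvd2
  have hsum : x₁ * a + x₂ * b = s := by omega
  refine ⟨x₁, x₂, ?_, hx₂m, hsum⟩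
  rcases hcase with hc | hc
  · have hlt : x₁ * a < b * a := by
      have hba : b * a = a * b := Nat.mul_comm b a
      omega
    have : x₁ < b := Nat.lt_of_mul_lt_mul_right hlt
    omega
  · have hx₂r : x₂ + r₁ = m₂ := hc
    by_contra hgt
    push_neg at hgt
    have h4 : (m₁ + 1) * a ≤ x₁ * a := Nat.mul_le_mul_right a hgt
    have h4' : (m₁ + 1) * a = m₁ * a + a := by ring
    have h5 : x₂ * b + r₁ * b = m₂ * b := by
      have h := congrArg (fun z => z * b) hx₂r
      simpa [add_mul] using h
    have h6 : r₁ * b + b ≤ a * b := by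
      have h : (r₁ + 1) * b ≤ a * b := Nat.mul_le_mul_right b (by omega)
      calc r₁ * b + b = (r₁ + 1) * b := by ring
      _ ≤ a * b := h
    omega


lemma mulexp (X A : ℕ) (hA : 1 ≤ A) : X * (A - 1) + X = X * A := by
  calc X * (A - 1) + X = X * ((A - 1) + 1) := by ring
  _ = X * A := by rw [show (A - 1) + 1 = A by omega]

/-- the near-full pairwise-coprime interval lemma -/
lemma NF2 (rest : List (ℕ × ℕ)) :
    ∀ (a b : ℕ × ℕ) (R s : ℕ),
    1 ≤ R →
    List.Pairwise (fun p q : ℕ × ℕ => p.1 ≤ q.1) (a :: b :: rest) →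
    List.Pairwise (fun p q : ℕ × ℕ => Nat.Coprime p.1 q.1) (a :: b :: rest) →
    (∀ p ∈ a :: b :: rest, 2 ≤ p.1) →
    (R = 1 → rest ≠ []) →
    (∀ p ∈ a :: b :: rest, ∀ Q', p.1 * Q' = Pr (a :: b :: rest) →
        R * (Q' * (p.1 - 1)) < p.2 * p.1) →
    a.1 * b.1 ≤ s → s + a.1 * b.1 ≤ Ms (a :: b :: rest) →
    Reach (a :: b :: rest) s := by
  induction rest using List.reverseRecOn with
  | nil =>
      intro a b R s hR hsort hco h2 hbase hnf hs1 hs2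
      have hR2 : 2 ≤ R := by
        by_cases hR1 : R = 1
        · exact absurd rfl (hbase hR1)
        · omega
      have ha2 : 2 ≤ a.1 := h2 a (by simp)
      have hb2 : 2 ≤ b.1 := h2 b (by simp)
      have hcoab : Nat.Coprime a.1 b.1 := by
        have := List.pairwise_cons.1 hco
        exact this.1 b (by simp)
      have hPr : Pr [a, b] = a.1 * b.1 := by simp
      -- m₁ = a.2 ≥ b.1
      have hma : b.1 ≤ a.2 := by
        have h := hnf a (by simp) b.1 (by simp)
        have h' : 2 * (b.1 * (a.1 - 1)) ≤ R * (b.1 * (a.1 - 1)) :=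
          Nat.mul_le_mul_right _ hR2
        by_contra hlt
        push_neg at hlt
        have h1 : a.2 * a.1 ≤ (b.1 - 1) * a.1 := Nat.mul_le_mul_right _ (by omega)
        have e1 : b.1 * (a.1 - 1) + b.1 = b.1 * a.1 := mulexp _ _ (by omega)
        have e2 : (b.1 - 1) * a.1 + a.1 = b.1 * a.1 := by
          calc (b.1 - 1) * a.1 + a.1 = ((b.1 - 1) + 1) * a.1 := by ring
          _ = b.1 * a.1 := by rw [show (b.1 - 1) + 1 = b.1 by omega]
        have e3 : 2 * b.1 ≤ b.1 * a.1 := by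
          calc 2 * b.1 = b.1 * 2 := by ring
          _ ≤ b.1 * a.1 := Nat.mul_le_mul_left _ ha2
        omega
      have hmb : a.1 ≤ b.2 := by
        have h := hnf b (by simp) a.1 (by simp [Nat.mul_comm])
        have h' : 2 * (a.1 * (b.1 - 1)) ≤ R * (a.1 * (b.1 - 1)) :=
          Nat.mul_le_mul_right _ hR2
        by_contra hlt
        push_neg at hlt
        have h1 : b.2 * b.1 ≤ (a.1 - 1) * b.1 := Nat.mul_le_mul_right _ (by omega)
        have e1 : a.1 * (b.1 - 1) + a.1 = a.1 * b.1 := mulexp _ _ (by omega)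
        have e2 : (a.1 - 1) * b.1 + b.1 = a.1 * b.1 := by
          calc (a.1 - 1) * b.1 + b.1 = ((a.1 - 1) + 1) * b.1 := by ring
          _ = a.1 * b.1 := by rw [show (a.1 - 1) + 1 = a.1 by omega]
        have e3 : 2 * a.1 ≤ a.1 * b.1 := by
          calc 2 * a.1 = a.1 * 2 := by ring
          _ ≤ a.1 * b.1 := Nat.mul_le_mul_left _ hb2
        omega
      have hMs : Ms [a, b] = a.2 * a.1 + b.2 * b.1 := by simp
      rw [hMs] at hs2
      obtain ⟨x₁, x₂, hx₁, hx₂, hxy⟩ :=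
        twofull (by omega : 1 ≤ a.1) (by omega : 1 ≤ b.1) hcoab hma hmb hs1 (by omega)
      have : Reach [a, b] (x₁ * a.1 + (x₂ * b.1 + 0)) :=
        Reach.cons a x₁ _ _ hx₁ (Reach.cons b x₂ 0 [] hx₂ .nil)
      simpa [hxy, Nat.add_assoc] using (by simpa using this : Reach [a, b] (x₁ * a.1 + (x₂ * b.1 + 0)))
  | append_singleton rest' c ih =>
      intro a b R s hR hsort hco h2 hbase hnf hs1 hs2
      have hC2 : 2 ≤ c.1 := h2 c (by simp)
      have hb2 : 2 ≤ b.1 := h2 b (by simp)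
      have ha2 : 2 ≤ a.1 := h2 a (by simp)
      -- b.1 ≤ c.1 from sortedness
      have hbc : b.1 ≤ c.1 := by
        have h := (List.pairwise_cons.1 hsort).2
        have h' := (List.pairwise_cons.1 h).1
        exact h' c (by simp)
      have hcobc : Nat.Coprime b.1 c.1 := by
        have h := (List.pairwise_cons.1 hco).2
        exact (List.pairwise_cons.1 h).1 c (by simp)
      have hC3 : 3 ≤ c.1 := by
        rcases Nat.lt_or_ge c.1 3 with h | h
        · have hc2 : c.1 = 2 := by omega
        -- then b.1 = 2, contradiction with coprimality
          have hb2' : b.1 = 2 := by omega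
          rw [hb2', hc2] at hcobc
          norm_num [Nat.Coprime] at hcobc
        · exact h
      set μ := a.1 * b.1 with hμ
      have hμ4 : 4 ≤ μ := by
        calc 4 = 2 * 2 := rfl
        _ ≤ a.1 * b.1 := Nat.mul_le_mul ha2 hb2
      -- define x
      set x := min c.2 ((s - μ) / c.1) with hx
      set s' := s - x * c.1 with hs'
      have hxc : x * c.1 ≤ s - μ := by
        have h1 : x ≤ (s - μ) / c.1 := min_le_right _ _
        calc x * c.1 ≤ ((s - μ) / c.1) * c.1 := Nat.mul_le_mul_right _ h1
        _ ≤ s - μ := Nat.div_mul_le_self _ _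
      have hs'ge : μ ≤ s' := by omega
      -- list facts
      have hsub : (a :: b :: rest').Sublist (a :: b :: (rest' ++ [c])) := by
        refine List.Sublist.cons₂ _ (List.Sublist.cons₂ _ ?_)
        exact List.sublist_append_left _ _
      have hsort' : List.Pairwise (fun p q : ℕ × ℕ => p.1 ≤ q.1) (a :: b :: rest') :=
        hsort.sublist hsub
      have hco' : List.Pairwise (fun p q : ℕ × ℕ => Nat.Coprime p.1 q.1) (a :: b :: rest') :=
        hco.sublist hsub
      have h2' : ∀ p ∈ a :: b :: rest', 2 ≤ p.1 := fun p hp => h2 p (hsub.mem hp)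
      -- product split
      have hPr : Pr (a :: b :: (rest' ++ [c])) = Pr (a :: b :: rest') * c.1 := by simp; ring
      have hMs : Ms (a :: b :: (rest' ++ [c])) = Ms (a :: b :: rest') + c.2 * c.1 := by
        simp; ring
      set P' := Pr (a :: b :: rest') with hP'
      set M' := Ms (a :: b :: rest') with hM'
      -- near-full for smaller list with R' = R * c.1
      have hnf' : ∀ p ∈ a :: b :: rest', ∀ Q', p.1 * Q' = P' →
          (R * c.1) * (Q' * (p.1 - 1)) < p.2 * p.1 := by
        intro p hp Q' hQ'
        have h := hnf p (hsub.mem hp) (Q' * c.1) (by rw [hPr, ← hQ']; ring)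
        calc (R * c.1) * (Q' * (p.1 - 1)) = R * (Q' * c.1 * (p.1 - 1)) := by ring
        _ < p.2 * p.1 := h
      -- M' ≥ R*c.1*P' + 2  (from piles a and b)
      have hMP : (R * c.1) * P' + 2 ≤ M' := by
        have hQa : a.1 * (b.1 * Pr rest') = P' := by simp [hP']
        have hQb : b.1 * (a.1 * Pr rest') = P' := by simp [hP']; ring
        have hA := hnf' a (by simp) _ hQa
        have hB := hnf' b (by simp) _ hQb
        have e1 : 2 * ((b.1 * Pr rest') * (a.1 - 1)) ≥ (b.1 * Pr rest') * a.1 := by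
          have : (b.1 * Pr rest') * (2 * (a.1 - 1)) ≥ (b.1 * Pr rest') * a.1 :=
            Nat.mul_le_mul_left _ (by omega)
          calc 2 * ((b.1 * Pr rest') * (a.1 - 1)) = (b.1 * Pr rest') * (2 * (a.1 - 1)) := by
                ring
          _ ≥ (b.1 * Pr rest') * a.1 := this
        have e2 : 2 * ((a.1 * Pr rest') * (b.1 - 1)) ≥ (a.1 * Pr rest') * b.1 := by
          have : (a.1 * Pr rest') * (2 * (b.1 - 1)) ≥ (a.1 * Pr rest') * b.1 :=
            Nat.mul_le_mul_left _ (by omega)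
          calc 2 * ((a.1 * Pr rest') * (b.1 - 1)) = (a.1 * Pr rest') * (2 * (b.1 - 1)) := by
                ring
          _ ≥ (a.1 * Pr rest') * b.1 := this
      -- combine: 2*M' ≥ 2*(a.2*a.1) + 2*(b.2*b.1) ≥ 2R'Qa(a-1)+2 + 2R'Qb(b-1)+2 ≥ 2R'P' + 4
        have hMge : a.2 * a.1 + b.2 * b.1 ≤ M' := by
          have : M' = a.2 * a.1 + (b.2 * b.1 + Ms rest') := by simp [hM']
          omega
        have c1 : (b.1 * Pr rest') * a.1 = P' := by rw [← hQa]; ring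
        have c2 : (a.1 * Pr rest') * b.1 = P' := by rw [← hQb]; ring
        -- arithmetic
        have hA' : (R*c.1) * (b.1 * Pr rest' * (a.1-1)) + 1 ≤ a.2 * a.1 := hA
        have hB' : (R*c.1) * (a.1 * Pr rest' * (b.1-1)) + 1 ≤ b.2 * b.1 := hB
        have f1 : 2 * ((R*c.1) * (b.1 * Pr rest' * (a.1-1))) ≥ (R*c.1) * P' := by
          calc 2 * ((R*c.1) * (b.1 * Pr rest' * (a.1-1)))
              = (R*c.1) * (2 * (b.1 * Pr rest' * (a.1-1))) := by ring
          _ ≥ (R*c.1) * ((b.1 * Pr rest') * a.1) := Nat.mul_le_mul_left _ e1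
          _ = (R*c.1) * P' := by rw [c1]
        have f2 : 2 * ((R*c.1) * (a.1 * Pr rest' * (b.1-1))) ≥ (R*c.1) * P' := by
          calc 2 * ((R*c.1) * (a.1 * Pr rest' * (b.1-1)))
              = (R*c.1) * (2 * (a.1 * Pr rest' * (b.1-1))) := by ring
          _ ≥ (R*c.1) * ((a.1 * Pr rest') * b.1) := Nat.mul_le_mul_left _ e2
          _ = (R*c.1) * P' := by rw [c2]
        omega
      -- P' ≥ μ so M' ≥ c.1*μ + 2
      have hP'μ : μ ≤ P' := by
        have : P' = μ * Pr rest' := by simp [hP', hμ]; ring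
        have hpos : 1 ≤ Pr rest' := Pr_pos (fun p hp => by
          have := h2' p (by simp [hp]); omega)
        calc μ = μ * 1 := by ring
        _ ≤ μ * Pr rest' := Nat.mul_le_mul_left _ hpos
        _ = P' := this.symm
      have hMcμ : c.1 * μ + 2 ≤ M' := by
        have h1 : c.1 * μ ≤ (R * c.1) * P' := by
          calc c.1 * μ ≤ c.1 * P' := Nat.mul_le_mul_left _ hP'μ
          _ ≤ (R * c.1) * P' := Nat.mul_le_mul_right _ (by
              calc c.1 = 1 * c.1 := by ring
              _ ≤ R * c.1 := Nat.mul_le_mul_right _ hR)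
        omega
      -- s' + μ ≤ M'
      have hs'le : s' + μ ≤ M' := by
        rcases le_or_gt c.2 ((s - μ) / c.1) with hcc | hcc
        · -- x = c.2
          have hxx : x = c.2 := by omega
          have hxc1 : x * c.1 = c.2 * c.1 := by rw [hxx]
          have : s + μ ≤ M' + c.2 * c.1 := by
            rw [← hMs]; exact hs2
          omega
        · -- x = (s-μ)/c.1 : s' ≤ μ + c.1 - 1
          have hxx : x = (s - μ) / c.1 := by omega
          have hdm := Nat.div_add_mod (s - μ) c.1
          have hmod : (s - μ) % c.1 < c.1 := Nat.mod_lt _ (by omega)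
          have hs'small : s' + 1 ≤ μ + c.1 := by
            have hxc1 : x * c.1 = c.1 * ((s - μ) / c.1) := by rw [hxx]; ring
            omega
          -- c.1*μ ≥ 2μ + c.1 - 1
          have hkey : 2 * μ + c.1 ≤ c.1 * μ + 1 := by
            have h1 : (1 : ℕ) * 1 ≤ (c.1 - 2) * (μ - 1) := Nat.mul_le_mul (by omega) (by omega)
            have e : (c.1 - 2) * (μ - 1) + (c.1 + 2 * μ) = c.1 * μ + 2 := by
              have e1 : c.1 - 2 + 2 = c.1 := by omega
              have e2 : μ - 1 + 1 = μ := by omega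
              calc (c.1 - 2) * (μ - 1) + (c.1 + 2 * μ)
                  = (c.1 - 2) * (μ - 1) + ((c.1 - 2) + 2 + 2 * ((μ - 1) + 1)) := by
                    rw [e1, e2]
              _ = ((c.1 - 2) + 2) * ((μ - 1) + 1) + 2 := by ring
              _ = c.1 * μ + 2 := by rw [e1, e2]
            omega
          omega
      -- apply IH
      have hreach' : Reach (a :: b :: rest') s' :=
        ih a b (R * c.1) s' (Nat.mul_pos (by omega) (by omega)) hsort' hco' h2'
          (by intro h1; exfalso; have h2c : 2 ≤ R * c.1 := by
                calc 2 ≤ c.1 := hC2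
                _ = 1 * c.1 := by ring
                _ ≤ R * c.1 := Nat.mul_le_mul_right _ hR
              omega)
          hnf' hs'ge hs'le
      -- assemble
      have hxle : x ≤ c.2 := min_le_left _ _
      have hfinal := reach_append hreach' (reach_single c x hxle)
      have : s' + x * c.1 = s := by omega
      rw [this] at hfinal
      simpa using hfinal


/-- The main lemma. -/
lemma main_lemma : ∀ (n : ℕ) (l : List (ℕ × ℕ)), l.length ≤ n → (∀ p ∈ l, 1 ≤ p.1) →
    ∀ k, (k + 1) * Pr l ≤ Ms l → Reach l (k * Pr l) := by
  intro n
  induction n with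
  | zero =>
      intro l hlen hpos k hk
      have hl : l = [] := List.length_eq_zero_iff.1 (Nat.le_zero.1 hlen)
      subst hl
      simp [Pr, Ms] at hk
  | succ n ihn =>
      intro l hlen hpos k
      induction k using Nat.strong_induction_on generalizing l with
      | _ k ihk =>
      intro hk
      rcases Nat.eq_zero_or_pos k with rfl | hk1
      · simpa using reach_zero l
      have hPpos : 1 ≤ Pr l := Pr_pos hpos
      have hlne : l ≠ [] := by
        intro h; subst h; simp [Pr, Ms] at hk
      -- ===================== Branch A : some pile ≥ P =====================
      by_cases hA : ∃ p ∈ l, Pr l ≤ p.2 * p.1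
      · obtain ⟨p, hp, hpile⟩ := hA
        obtain ⟨l₁, l₂, hsplit⟩ := List.append_of_mem hp
        have hperm : l.Perm (p :: (l₁ ++ l₂)) := by
          rw [hsplit]; exact List.perm_middle
        set rest := l₁ ++ l₂ with hrestdef
        have hPr : Pr l = p.1 * Pr rest := by rw [Pr_perm hperm, Pr_cons]
        have hd1 : 1 ≤ p.1 := hpos p hp
        have hQm : Pr rest ≤ p.2 := by
          have h1 : Pr rest * p.1 ≤ p.2 * p.1 := by
            calc Pr rest * p.1 = Pr l := by rw [hPr]; ring
            _ ≤ p.2 * p.1 := hpile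
          exact Nat.le_of_mul_le_mul_right h1 (by omega)
        set l' := (p.1, p.2 - Pr rest) :: rest with hl'def
        have hlen' : l'.length ≤ n + 1 := by
          have h1 := hperm.length_eq
          simp only [hl'def, List.length_cons] at *
          omega
        have hpos' : ∀ q ∈ l', 1 ≤ q.1 := by
          intro q hq
          rcases List.mem_cons.1 hq with rfl | hq
          · exact hd1
          · exact hpos q (hperm.mem_iff.2 (by simp [hq]))
        have hPr' : Pr l' = Pr l := by rw [hl'def, Pr_cons, hPr]
        have hMs' : Ms l' + Pr l = Ms l := by
          have h1 : Ms l = p.2 * p.1 + Ms rest := by rw [Ms_perm hperm, Ms_cons]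
          have h2 : Ms l' = (p.2 - Pr rest) * p.1 + Ms rest := by rw [hl'def, Ms_cons]
          have h3 : (p.2 - Pr rest) * p.1 + Pr rest * p.1 = p.2 * p.1 := by
            rw [← add_mul, show p.2 - Pr rest + Pr rest = p.2 by omega]
          have h4 : Pr rest * p.1 = Pr l := by rw [hPr]; ring
          omega
        have hk' : (k - 1 + 1) * Pr l' ≤ Ms l' := by
          rw [hPr']
          have h5 : (k - 1 + 1) * Pr l + Pr l = (k + 1) * Pr l := by
            rw [show k - 1 + 1 = k by omega]; ring
          omega
        have hre := ihk (k - 1) (by omega) l' hlen' hpos' hk'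
        rw [hPr'] at hre
        rcases reach_cons_iff.1 hre with ⟨x, s', hx, hs', hxs⟩
        have hred : Reach (p :: rest) ((x + Pr rest) * p.1 + s') :=
          .cons p (x + Pr rest) s' rest (by simp only [hl'def] at hx; omega) hs'
        have heval : (x + Pr rest) * p.1 + s' = k * Pr l := by
          have h4 : Pr rest * p.1 = Pr l := by rw [hPr]; ring
          have h5 : (x + Pr rest) * p.1 = x * p.1 + Pr rest * p.1 := by ring
          have h6 : (k - 1) * Pr l + Pr l = k * Pr l := by
            rw [show (k-1) * Pr l + Pr l = (k - 1 + 1) * Pr l by ring,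
              show k - 1 + 1 = k by omega]
          simp only [hl'def] at hxs
          omega
        rw [heval] at hred
        exact Reach.perm hperm.symm hred
      push_neg at hA
      -- ===================== Branch E : some not-near-full coordinate ============
      by_cases hE : ∃ p l₁ l₂, l = l₁ ++ p :: l₂ ∧ p.2 * p.1 + Pr (l₁ ++ l₂) ≤ Pr l
      · obtain ⟨p, l₁, l₂, hsplit, hnf⟩ := hE
        have hperm : l.Perm (p :: (l₁ ++ l₂)) := by
          rw [hsplit]; exact List.perm_middle
        set rest := l₁ ++ l₂ with hrestdef
        have hPr : Pr l = p.1 * Pr rest := by rw [Pr_perm hperm, Pr_cons]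
        have hlenr : rest.length ≤ n := by
          have h1 := hperm.length_eq
          simp only [List.length_cons] at h1
          omega
        have hposr : ∀ q ∈ rest, 1 ≤ q.1 := by
          intro q hq; exact hpos q (hperm.mem_iff.2 (by simp [hq]))
        have hcond : (k * p.1 + 1) * Pr rest ≤ Ms rest := by
          have h1 : Ms l = p.2 * p.1 + Ms rest := by rw [Ms_perm hperm, Ms_cons]
          have e1 : (k * p.1 + 1) * Pr rest = k * p.1 * Pr rest + Pr rest := by ring
          have e2 : k * p.1 * Pr rest = k * Pr l := by rw [hPr]; ring
          have e3 : (k + 1) * Pr l = k * Pr l + Pr l := by ring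
          omega
        have hre := ihn rest hlenr hposr (k * p.1) hcond
        have hred : Reach (p :: rest) (0 * p.1 + k * p.1 * Pr rest) :=
          .cons p 0 _ rest (Nat.zero_le _) hre
        have heval : 0 * p.1 + k * p.1 * Pr rest = k * Pr l := by
          have e2 : k * p.1 * Pr rest = k * Pr l := by rw [hPr]; ring
          omega
        rw [heval] at hred
        exact Reach.perm hperm.symm hred
      push_neg at hE
      -- ===================== Branch C : gcd ≥ 2 peel =====================
      by_cases hC : ∃ p l₁ l₂, l = l₁ ++ p :: l₂ ∧ 2 ≤ p.1 ∧ 2 ≤ Nat.gcd p.1 (Pr (l₁ ++ l₂))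
      · obtain ⟨p, l₁, l₂, hsplit, hd2, hg2⟩ := hC
        have hp : p ∈ l := by rw [hsplit]; simp
        have hperm : l.Perm (p :: (l₁ ++ l₂)) := by
          rw [hsplit]; exact List.perm_middle
        set rest := l₁ ++ l₂ with hrestdef
        have hPr : Pr l = p.1 * Pr rest := by rw [Pr_perm hperm, Pr_cons]
        have hlenr : rest.length ≤ n := by
          have h1 := hperm.length_eq
          simp only [List.length_cons] at h1
          omega
        have hposr : ∀ q ∈ rest, 1 ≤ q.1 := by
          intro q hq; exact hpos q (hperm.mem_iff.2 (by simp [hq]))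
        have hQ'pos : 1 ≤ Pr rest := Pr_pos hposr
        set d := p.1 with hddef
        set m := p.2 with hmdef
        set Q' := Pr rest with hQ'def
        set g := Nat.gcd d Q' with hgdef
        obtain ⟨c₁, hc₁⟩ : g ∣ d := Nat.gcd_dvd_left d Q'
        obtain ⟨Q₁, hQ₁⟩ : g ∣ Q' := Nat.gcd_dvd_right d Q'
        have hc₁pos : 1 ≤ c₁ := by
          rcases Nat.eq_zero_or_pos c₁ with h | h
          · rw [h] at hc₁; omega
          · exact h
        have hQ₁pos : 1 ≤ Q₁ := by
          rcases Nat.eq_zero_or_pos Q₁ with h | h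
          · rw [h] at hQ₁; omega
          · exact h
        have hkey : Q₁ * d = c₁ * Q' := by rw [hc₁, hQ₁]; ring
        -- m < Q'
        have hmQ' : m < Q' := by
          have h1 : m * d < Q' * d := by
            calc m * d < Pr l := hA p hp
            _ = Q' * d := by rw [hPr]; ring
          exact Nat.lt_of_mul_lt_mul_right h1
        have hdm : Q₁ * (m / Q₁) + m % Q₁ = m := Nat.div_add_mod m Q₁
        have hbQ₁ : m % Q₁ < Q₁ := Nat.mod_lt m (by omega)
        set t := m / Q₁ with htdef
        set b := m % Q₁ with hbdef
        have htg : t < g := by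
          have h2 : t * Q₁ ≤ m := by rw [Nat.mul_comm]; omega
          have h3 : g * Q₁ = Q' := hQ₁.symm
          have h1 : t * Q₁ < g * Q₁ := by omega
          exact Nat.lt_of_mul_lt_mul_right h1
        have h2c : 2 * c₁ ≤ g * c₁ := Nat.mul_le_mul_right c₁ hg2
        have htc : t * c₁ + c₁ ≤ k * d := by
          have h1 : t * c₁ + c₁ = (t + 1) * c₁ := by ring
          have h2 : (t + 1) * c₁ ≤ g * c₁ := Nat.mul_le_mul_right c₁ (by omega)
          have h3 : g * c₁ = d := hc₁.symm
          have h4 : d ≤ k * d := by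
            calc d = 1 * d := by ring
            _ ≤ k * d := Nat.mul_le_mul_right d hk1
          omega
        set k' := k * d - t * c₁ with hk'def
        have hk'eq : k' + t * c₁ = k * d := by omega
        have hcond : (k' + 1) * Q' ≤ Ms rest := by
          have f1 : (k' + 1) * Q' = k' * Q' + Q' := by ring
          have f2 : (k' + t * c₁) * Q' = k' * Q' + t * (c₁ * Q') := by ring
          have f3 : (k' + t * c₁) * Q' = k * (d * Q') := by rw [hk'eq]; ring
          have f4 : m * d = t * (c₁ * Q') + b * d := by
            calc m * d = (Q₁ * t + b) * d := by rw [hdm]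
            _ = t * (Q₁ * d) + b * d := by ring
            _ = t * (c₁ * Q') + b * d := by rw [hkey]
          have f5 : (b + 1) * d ≤ Q₁ * d := Nat.mul_le_mul_right d (by omega)
          have f5' : (b + 1) * d = b * d + d := by ring
          have f6 : (1 + c₁) * Q' ≤ d * Q' := by
            refine Nat.mul_le_mul_right Q' ?_
            omega
          have f7 : (1 + c₁) * Q' = Q' + c₁ * Q' := by ring
          have f8 : (k + 1) * (d * Q') ≤ Ms l := by
            calc (k + 1) * (d * Q') = (k + 1) * Pr l := by rw [hPr]
            _ ≤ Ms l := hk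
          have f9 : (k + 1) * (d * Q') = k * (d * Q') + d * Q' := by ring
          have f10 : Ms l = m * d + Ms rest := by rw [Ms_perm hperm, Ms_cons]
          omega
        have hre := ihn rest hlenr hposr k' hcond
        have hxm : Q₁ * t ≤ m := by omega
        have hred : Reach (p :: rest) ((Q₁ * t) * d + k' * Q') :=
          .cons p (Q₁ * t) _ rest hxm hre
        have heval : (Q₁ * t) * d + k' * Q' = k * Pr l := by
          have f2 : (k' + t * c₁) * Q' = k' * Q' + t * (c₁ * Q') := by ring
          have f3 : (k' + t * c₁) * Q' = k * (d * Q') := by rw [hk'eq]; ring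
          have f11 : (Q₁ * t) * d = t * (c₁ * Q') := by
            calc (Q₁ * t) * d = t * (Q₁ * d) := by ring
            _ = t * (c₁ * Q') := by rw [hkey]
          have f12 : k * Pr l = k * (d * Q') := by rw [hPr]
          omega
        rw [heval] at hred
        exact Reach.perm hperm.symm hred
      push_neg at hC
      -- ===================== Final branch =====================
      -- partition into ones and bigs
      set ones := l.filter (fun p => p.1 == 1) with honesdef
      set bigs := l.filter (fun p => !(p.1 == 1)) with hbigsdef
      have hpart : (ones ++ bigs).Perm l := List.filter_append_perm _ l
      have hones1 : ∀ p ∈ ones, p.1 = 1 := by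
        intro p hp
        have := (List.mem_filter.1 hp).2
        simpa using this
      have hbigs2 : ∀ p ∈ bigs, 2 ≤ p.1 := by
        intro p hp
        have h1 := (List.mem_filter.1 hp).2
        have h2 : ¬ p.1 = 1 := by simpa using h1
        have h3 : 1 ≤ p.1 := hpos p (List.mem_of_mem_filter hp)
        omega
      have hPrones : Pr ones = 1 := by
        apply List.prod_eq_one
        intro x hx
        rcases List.mem_map.1 hx with ⟨p, hp, rfl⟩
        exact hones1 p hp
      have hPrbigs : Pr bigs = Pr l := by
        have h1 : Pr (ones ++ bigs) = Pr l := Pr_perm hpart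
        rw [Pr_append, hPrones, one_mul] at h1
        exact h1
      set u := Ms ones with hudef
      have hMsl : u + Ms bigs = Ms l := by
        have h1 : Ms (ones ++ bigs) = Ms l := Ms_perm hpart
        rwa [Ms_append] at h1
      -- per-big facts
      have hbigfact : ∀ p ∈ bigs, ∀ Q', p.1 * Q' = Pr l →
          (Nat.Coprime p.1 Q' ∧ Pr l < p.2 * p.1 + Q' ∧ p.2 < Q') := by
        intro p hpb Q' hQ'
        have hpl : p ∈ l := List.mem_of_mem_filter hpb
        have hd2 : 2 ≤ p.1 := hbigs2 p hpb
        obtain ⟨l₁, l₂, hsplit⟩ := List.append_of_mem hpl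
        have hperm : l.Perm (p :: (l₁ ++ l₂)) := by rw [hsplit]; exact List.perm_middle
        have hPr2 : Pr l = p.1 * Pr (l₁ ++ l₂) := by rw [Pr_perm hperm, Pr_cons]
        have hQeq : Q' = Pr (l₁ ++ l₂) := by
          have := hQ'.trans hPr2
          exact Nat.eq_of_mul_eq_mul_left (by omega) this
        have hgcd := hC p l₁ l₂ hsplit hd2
        have hgcd0 : Nat.gcd p.1 (Pr (l₁ ++ l₂)) ≠ 0 := by
          intro h0
          have := Nat.eq_zero_of_gcd_eq_zero_left h0
          omega
        have hco : Nat.Coprime p.1 Q' := by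
          rw [hQeq]
          have : Nat.gcd p.1 (Pr (l₁ ++ l₂)) = 1 := by omega
          exact this
        have hnf2 := hE p l₁ l₂ hsplit
        have hsm : p.2 < Q' := by
          have h1 : p.2 * p.1 < Q' * p.1 := by
            calc p.2 * p.1 < Pr l := hA p hpl
            _ = Q' * p.1 := by rw [← hQ']; ring
          exact Nat.lt_of_mul_lt_mul_right h1
        exact ⟨hco, by omega, hsm⟩
      -- pairwise coprime on bigs
      have hpw : List.Pairwise (fun p q : ℕ × ℕ => Nat.Coprime p.1 q.1) bigs := by
        rw [List.pairwise_iff_forall_sublist]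
        intro x y hsub
        have hxb : x ∈ bigs := hsub.mem (by simp)
        have hd2 : 2 ≤ x.1 := hbigs2 x hxb
        have hsubl : [x, y].Sublist l := hsub.trans (List.filter_sublist (l := l))
        obtain ⟨r₁, r₂, hl12, hxr, hyr⟩ := List.cons_sublist_iff.1 hsubl
        have hyr₂ : y ∈ r₂ := List.singleton_sublist.1 hyr
        obtain ⟨a₁, a₂, hr₁⟩ := List.append_of_mem hxr
        have hsplit : l = a₁ ++ x :: (a₂ ++ r₂) := by
          rw [hl12, hr₁]; simp
        have hgcd := hC x a₁ (a₂ ++ r₂) hsplit hd2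
        have hgcd0 : Nat.gcd x.1 (Pr (a₁ ++ (a₂ ++ r₂))) ≠ 0 := by
          intro h0
          have := Nat.eq_zero_of_gcd_eq_zero_left h0
          omega
        have hco : Nat.Coprime x.1 (Pr (a₁ ++ (a₂ ++ r₂))) := by
          have : Nat.gcd x.1 (Pr (a₁ ++ (a₂ ++ r₂))) = 1 := by omega
          exact this
        have hdvd : y.1 ∣ Pr (a₁ ++ (a₂ ++ r₂)) := by
          apply List.dvd_prod
          simp only [List.map_append, List.mem_append]
          right; right
          exact List.mem_map.2 ⟨y, hyr₂, rfl⟩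
        exact Nat.Coprime.coprime_dvd_right hdvd hco
      -- sort bigs
      obtain ⟨sbigs, hperm2, hsort⟩ :
          ∃ sb : List (ℕ × ℕ), sb.Perm bigs ∧
            List.Pairwise (fun p q : ℕ × ℕ => p.1 ≤ q.1) sb := by
        refine ⟨bigs.mergeSort (fun p q => decide (p.1 ≤ q.1)),
          List.mergeSort_perm bigs _, ?_⟩
        have h1 := List.pairwise_mergeSort (le := fun p q : ℕ × ℕ => decide (p.1 ≤ q.1))
          (fun a b c hab hbc => by
            simp only [decide_eq_true_eq] at *; omega)
          (fun a b => by
            simp only [Bool.or_eq_true, decide_eq_true_eq]; omega) bigs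
        exact h1.imp (fun h => by simpa using h)
      have hpw2 : List.Pairwise (fun p q : ℕ × ℕ => Nat.Coprime p.1 q.1) sbigs :=
        (List.Perm.pairwise_iff (fun h => Nat.Coprime.symm h) hperm2).2 hpw
      have h2s : ∀ p ∈ sbigs, 2 ≤ p.1 := fun p hp => hbigs2 p (hperm2.mem_iff.1 hp)
      have hPrs : Pr sbigs = Pr l := by rw [Pr_perm hperm2, hPrbigs]
      have hMss : Ms sbigs = Ms bigs := Ms_perm hperm2
      -- near-full in NF2 form
      have hnfs : ∀ p ∈ sbigs, ∀ Q', p.1 * Q' = Pr sbigs →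
          1 * (Q' * (p.1 - 1)) < p.2 * p.1 := by
        intro p hp Q' hQ'
        have hpb : p ∈ bigs := hperm2.mem_iff.1 hp
        have hd2 : 2 ≤ p.1 := hbigs2 p hpb
        obtain ⟨_, hnf3, _⟩ := hbigfact p hpb Q' (by rw [← hPrs]; exact hQ')
        have e1 : Q' * (p.1 - 1) + Q' = Q' * p.1 := by
          calc Q' * (p.1 - 1) + Q' = Q' * ((p.1 - 1) + 1) := by ring
          _ = Q' * p.1 := by rw [show p.1 - 1 + 1 = p.1 by omega]
        have e2 : Q' * p.1 = Pr l := by rw [← hPrs, ← hQ']; ring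
        omega
      -- destructure sbigs
      rcases sbigs with _ | ⟨a, _ | ⟨b, rest⟩⟩
      · -- bigs empty : all ones, Pr l = 1, all piles zero : contradiction
        exfalso
        have hb0 : bigs = [] := (hperm2.symm).eq_nil
        have hPr1 : Pr l = 1 := by rw [← hPrbigs, hb0]; rfl
        have hms0 : Ms l = 0 := by
          have h1 : Ms bigs = 0 := by rw [hb0]; rfl
          have h2 : ∀ p ∈ ones, p.2 * p.1 = 0 := by
            intro p hp
            have := hA p (List.mem_of_mem_filter hp)
            omega
          have h3 : u = 0 := by
            rw [hudef]
            unfold Ms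
            apply List.sum_eq_zero
            intro x hx
            rcases List.mem_map.1 hx with ⟨p, hp, rfl⟩
            exact h2 p hp
          omega
        rw [hPr1, hms0] at hk
        omega
      · -- a single big : near-full forces pile ≥ Pr l : contradiction
        exfalso
        have hxb : a ∈ bigs := hperm2.mem_iff.1 (by simp)
        have hQx : a.1 * Pr ones = Pr l := by
          have h1 : Pr [a] = Pr l := by rw [Pr_perm hperm2, hPrbigs]
          simp only [Pr_cons, Pr_nil, Nat.mul_one] at h1
          rw [hPrones, Nat.mul_one]
          exact h1
        obtain ⟨_, hnf3, hsm⟩ := hbigfact a hxb (Pr ones) hQx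
        rw [hPrones] at hsm
        have := hA a (List.mem_of_mem_filter hxb)
        rw [hPrones] at hnf3
        omega
      rcases rest with _ | ⟨c0, rest'⟩
      · -- exactly two bigs : contradiction
        exfalso
        have hxb : a ∈ bigs := hperm2.mem_iff.1 (by simp)
        have hyb : b ∈ bigs := hperm2.mem_iff.1 (by simp)
        have hPr2 : Pr l = a.1 * b.1 := by
          rw [← hPrbigs, ← Pr_perm hperm2]
          simp
        have hQx : a.1 * b.1 = Pr l := hPr2.symm
        have hQy : b.1 * a.1 = Pr l := by rw [hPr2]; ring
        obtain ⟨_, hnfx, hsmx⟩ := hbigfact a hxb b.1 hQx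
        obtain ⟨_, hnfy, hsmy⟩ := hbigfact b hyb a.1 hQy
        have hx2 : a.2 * a.1 + a.1 ≤ b.1 * a.1 := by
          have h := Nat.mul_le_mul_right a.1 (show a.2 + 1 ≤ b.1 by omega)
          have e : (a.2 + 1) * a.1 = a.2 * a.1 + a.1 := by ring
          omega
        have hy2 : b.2 * b.1 + b.1 ≤ a.1 * b.1 := by
          have h := Nat.mul_le_mul_right b.1 (show b.2 + 1 ≤ a.1 by omega)
          have e : (b.2 + 1) * b.1 = b.2 * b.1 + b.1 := by ring
          omega
        have e1 : b.1 * a.1 = a.1 * b.1 := by ring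
        have ha2 : 2 ≤ a.1 := h2s a (by simp)
        have hb2 : 2 ≤ b.1 := h2s b (by simp)
        omega
      · -- main case : at least three bigs
        set rest := c0 :: rest' with hrestdef
        have hrne : rest ≠ [] := by simp [hrestdef]
        set μ := a.1 * b.1 with hμdef
        have ha2 : 2 ≤ a.1 := h2s a (by simp)
        have hb2 : 2 ≤ b.1 := h2s b (by simp)
        have hPrrest1 : 1 ≤ Pr rest := Pr_pos (fun p hp => by
          have := h2s p (by simp [hp]); omega)
        have hPrexp : Pr l = a.1 * (b.1 * Pr rest) := by rw [← hPrs]; simp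
        have hμP : μ ≤ Pr l := by
          rw [hPrexp, hμdef]
          calc a.1 * b.1 = a.1 * (b.1 * 1) := by ring
          _ ≤ a.1 * (b.1 * Pr rest) := by
              apply Nat.mul_le_mul_left
              exact Nat.mul_le_mul_left _ hPrrest1
        have h2μP : 2 * μ ≤ Pr l := by
          have hc02 : 2 ≤ c0.1 := h2s c0 (by simp [hrestdef])
          have hrest'1 : 1 ≤ Pr rest' := Pr_pos (fun p hp => by
            have := h2s p (by simp [hrestdef, hp]); omega)
          have h21 : 2 * 1 ≤ c0.1 * Pr rest' := Nat.mul_le_mul hc02 hrest'1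
          have hPrr : Pr rest = c0.1 * Pr rest' := by rw [hrestdef]; simp
          rw [hPrexp, hμdef]
          calc 2 * (a.1 * b.1) = a.1 * (b.1 * 2) := by ring
          _ ≤ a.1 * (b.1 * Pr rest) := by
              apply Nat.mul_le_mul_left
              apply Nat.mul_le_mul_left
              omega
        -- Ms bigs ≥ Pr l + 2
        have hMsbig : Pr l + 2 ≤ Ms bigs := by
          have hQa : a.1 * (b.1 * Pr rest) = Pr (a :: b :: rest) := by
            rw [hPrs]; exact hPrexp.symm
          have hQb : b.1 * (a.1 * Pr rest) = Pr (a :: b :: rest) := by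
            rw [hPrs, hPrexp]; ring
          have h1 := hnfs a (by simp) _ hQa
          have h2 := hnfs b (by simp) _ hQb
          rw [one_mul] at h1 h2
          have e1 : (b.1 * Pr rest) * (a.1 - 1) + (b.1 * Pr rest)
              = (b.1 * Pr rest) * a.1 := by
            calc (b.1 * Pr rest) * (a.1 - 1) + (b.1 * Pr rest)
                = (b.1 * Pr rest) * ((a.1 - 1) + 1) := by ring
            _ = (b.1 * Pr rest) * a.1 := by rw [show a.1 - 1 + 1 = a.1 by omega]
          have e1' : (b.1 * Pr rest) * a.1 = Pr l := by rw [hPrexp]; ring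
          have e2 : (a.1 * Pr rest) * (b.1 - 1) + (a.1 * Pr rest)
              = (a.1 * Pr rest) * b.1 := by
            calc (a.1 * Pr rest) * (b.1 - 1) + (a.1 * Pr rest)
                = (a.1 * Pr rest) * ((b.1 - 1) + 1) := by ring
            _ = (a.1 * Pr rest) * b.1 := by rw [show b.1 - 1 + 1 = b.1 by omega]
          have e2' : (a.1 * Pr rest) * b.1 = Pr l := by rw [hPrexp]; ring
          have e3 : 2 * (b.1 * Pr rest) ≤ Pr l := by
            rw [← e1']
            calc 2 * (b.1 * Pr rest) = (b.1 * Pr rest) * 2 := by ring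
            _ ≤ (b.1 * Pr rest) * a.1 := Nat.mul_le_mul_left _ ha2
          have e4 : 2 * (a.1 * Pr rest) ≤ Pr l := by
            rw [← e2']
            calc 2 * (a.1 * Pr rest) = (a.1 * Pr rest) * 2 := by ring
            _ ≤ (a.1 * Pr rest) * b.1 := Nat.mul_le_mul_left _ hb2
          have e5 : Ms (a :: b :: rest) = a.2 * a.1 + (b.2 * b.1 + Ms rest) := by simp
          rw [← hMss]
          omega
        -- choose s, f
        have hPkP : Pr l ≤ k * Pr l := by
          calc Pr l = 1 * Pr l := by ring
          _ ≤ k * Pr l := Nat.mul_le_mul_right _ hk1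
        have hkP1 : (k + 1) * Pr l = k * Pr l + Pr l := by ring
        obtain ⟨s, f, hsμ, hsM, hfu, hfs⟩ :
            ∃ s f, μ ≤ s ∧ s + μ ≤ Ms (a :: b :: rest) ∧ f ≤ u ∧ f + s = k * Pr l := by
          rcases le_or_gt (u + μ) (k * Pr l) with hcase | hcase
          · refine ⟨k * Pr l - u, u, by omega, ?_, le_rfl, by omega⟩
            rw [hMss]
            omega
          · refine ⟨μ, k * Pr l - μ, le_rfl, ?_, by omega, by omega⟩
            rw [hMss]
            omega
        have hr1 : Reach (a :: b :: rest) s :=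
          NF2 rest a b 1 s le_rfl hsort hpw2 h2s (fun _ => hrne) hnfs hsμ hsM
        have hr2 : Reach ones f := reach_ones hones1 (by omega)
        have hr3 : Reach (ones ++ (a :: b :: rest)) (f + s) := reach_append hr2 hr1
        rw [hfs] at hr3
        have hpermf : (ones ++ (a :: b :: rest)).Perm l :=
          (List.Perm.append_left ones hperm2).trans hpart
        exact Reach.perm hpermf hr3


lemma reach_ofFn : ∀ {r : ℕ} (g : Fin r → ℕ × ℕ) {s : ℕ}, Reach (List.ofFn g) s →
    ∃ w : Fin r → ℕ, (∀ i, w i ≤ (g i).2) ∧ ∑ i, w i * (g i).1 = s := by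
  intro r
  induction r with
  | zero =>
      intro g s h
      rw [List.ofFn_zero] at h
      cases h
      exact ⟨fun _ => 0, fun i => i.elim0, by simp⟩
  | succ n ih =>
      intro g s h
      rw [List.ofFn_succ] at h
      rcases reach_cons_iff.1 h with ⟨x, s', hx, h', rfl⟩
      obtain ⟨w', hw', hsum⟩ := ih _ h'
      refine ⟨Fin.cons x w', ?_, ?_⟩
      · intro i
        refine Fin.cases ?_ ?_ i
        · simpa using hx
        · intro j; simpa using hw' j
      · rw [Fin.sum_univ_succ]
        simp only [Fin.cons_zero, Fin.cons_succ]
        rw [hsum]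

end STP

/-- If `Σ mᵢdᵢ = q·N` with `N = ∏ dᵢ` and `q ≥ 1`, there exist `m'ᵢ ≤ mᵢ` with
`Σ m'ᵢdᵢ = N`. -/
theorem exists_subtuple_sum_eq_prod (r : ℕ) (d : Fin r → ℕ) (hd : ∀ i, 0 < d i)
    (q : ℕ) (hq : 1 ≤ q) (m : Fin r → ℕ)
    (hm : ∑ i, m i * d i = q * ∏ i, d i) :
    ∃ m' : Fin r → ℕ, (∀ i, m' i ≤ m i) ∧ ∑ i, m' i * d i = ∏ i, d i := by
  by_cases hq1 : q = 1
  · exact ⟨m, fun i => le_rfl, by rw [hm, hq1, one_mul]⟩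
  · have hq2 : 2 ≤ q := by omega
    set g : Fin r → ℕ × ℕ := fun i => (d i, m i) with hg
    have hPr : STP.Pr (List.ofFn g) = ∏ i, d i := by
      unfold STP.Pr
      rw [List.map_ofFn, List.prod_ofFn]
      rfl
    have hMs : STP.Ms (List.ofFn g) = ∑ i, m i * d i := by
      unfold STP.Ms
      rw [List.map_ofFn, List.sum_ofFn]
      rfl
    have hlen : (List.ofFn g).length ≤ r := by simp
    have hpos : ∀ p ∈ List.ofFn g, 1 ≤ p.1 := by
      intro p hp
      obtain ⟨i, rfl⟩ := List.mem_ofFn.1 hp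
      exact hd i
    have hk : (1 + 1) * STP.Pr (List.ofFn g) ≤ STP.Ms (List.ofFn g) := by
      rw [hPr, hMs, hm]
      exact Nat.mul_le_mul_right _ hq2
    have hre := STP.main_lemma r (List.ofFn g) hlen hpos 1 hk
    rw [one_mul, hPr] at hre
    obtain ⟨w, hw, hsum⟩ := STP.reach_ofFn g hre
    exact ⟨w, hw, hsum⟩
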